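/- With a, b, x₃, y₃ defined as above on {u₁ ≠ u₂} ⊂ ℝ⁴, the Poisson brackets satisfy {b, x₃} = 2y₃, {b, y₃} = 3x₃² + a, and {x₃, y₃} = −1. -/

import Mathlib

set_option maxHeartbeats 1000000

/-- Canonical Poisson bracket on phase space ℝ⁴ with coordinates
(u₁, u₂, p₁, p₂):  {F,G} = Σᵢ (∂F/∂uᵢ ∂G/∂pᵢ − ∂F/∂pᵢ ∂G/∂uᵢ). -/
noncomputable def pb (F G : ℝ × ℝ × ℝ × ℝ → ℝ) (z : ℝ × ℝ × ℝ × ℝ) : ℝ :=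
  fderiv ℝ F z (1, 0, 0, 0) * fderiv ℝ G z (0, 0, 1, 0)
  - fderiv ℝ F z (0, 0, 1, 0) * fderiv ℝ G z (1, 0, 0, 0)
  + fderiv ℝ F z (0, 1, 0, 0) * fderiv ℝ G z (0, 0, 0, 1)
  - fderiv ℝ F z (0, 0, 0, 1) * fderiv ℝ G z (0, 1, 0, 0)

noncomputable def aFun (z : ℝ × ℝ × ℝ × ℝ) : ℝ :=
  z.2.2.1 ^ 2 / (z.1 - z.2.1) + z.2.2.2 ^ 2 / (z.2.1 - z.1)
    - z.1 ^ 2 - z.1 * z.2.1 - z.2.1 ^ 2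

noncomputable def bFun (z : ℝ × ℝ × ℝ × ℝ) : ℝ :=
  z.2.1 * z.2.2.1 ^ 2 / (z.2.1 - z.1) + z.1 * z.2.2.2 ^ 2 / (z.1 - z.2.1)
    + (z.1 + z.2.1) * z.1 * z.2.1

noncomputable def x₃Fun (z : ℝ × ℝ × ℝ × ℝ) : ℝ :=
  ((z.2.2.1 - z.2.2.2) / (z.1 - z.2.1)) ^ 2 - (z.1 + z.2.1)

noncomputable def y₃Fun (z : ℝ × ℝ × ℝ × ℝ) : ℝ :=
  z.2.2.1 + ((z.2.2.1 - z.2.2.2) / (z.1 - z.2.1)) * (x₃Fun z - z.1)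

/-- {b, x₃} = 2y₃, {b, y₃} = 3x₃² + a, {x₃, y₃} = −1 on {u₁ ≠ u₂}. -/
theorem stmt_3 :
    ∀ z : ℝ × ℝ × ℝ × ℝ, z.1 ≠ z.2.1 →
      pb bFun x₃Fun z = 2 * y₃Fun z ∧
      pb bFun y₃Fun z = 3 * (x₃Fun z) ^ 2 + aFun z ∧
      pb x₃Fun y₃Fun z = -1 := by
  intro z hz
  have h1 : z.1 - z.2.1 ≠ 0 := sub_ne_zero.mpr hz
  have h2 : z.2.1 - z.1 ≠ 0 := sub_ne_zero.mpr (Ne.symm hz)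
  have hu1 : HasFDerivAt (fun w : ℝ×ℝ×ℝ×ℝ => w.1)
      (ContinuousLinearMap.fst ℝ ℝ (ℝ×ℝ×ℝ)) z := hasFDerivAt_fst
  have hu2 : HasFDerivAt (fun w : ℝ×ℝ×ℝ×ℝ => w.2.1)
      ((ContinuousLinearMap.fst ℝ ℝ (ℝ×ℝ)).comp (ContinuousLinearMap.snd ℝ ℝ (ℝ×ℝ×ℝ))) z :=
    hasFDerivAt_fst.comp z hasFDerivAt_snd
  have hp1 : HasFDerivAt (fun w : ℝ×ℝ×ℝ×ℝ => w.2.2.1)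
      ((ContinuousLinearMap.fst ℝ ℝ ℝ).comp ((ContinuousLinearMap.snd ℝ ℝ (ℝ×ℝ)).comp
        (ContinuousLinearMap.snd ℝ ℝ (ℝ×ℝ×ℝ)))) z :=
    hasFDerivAt_fst.comp z (hasFDerivAt_snd.comp z hasFDerivAt_snd)
  have hp2 : HasFDerivAt (fun w : ℝ×ℝ×ℝ×ℝ => w.2.2.2)
      ((ContinuousLinearMap.snd ℝ ℝ ℝ).comp ((ContinuousLinearMap.snd ℝ ℝ (ℝ×ℝ)).comp
        (ContinuousLinearMap.snd ℝ ℝ (ℝ×ℝ×ℝ)))) z :=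
    hasFDerivAt_snd.comp z (hasFDerivAt_snd.comp z hasFDerivAt_snd)
  -- inverses
  have hi1 : HasFDerivAt (fun w : ℝ×ℝ×ℝ×ℝ => (w.1 - w.2.1)⁻¹) _ z :=
    (hasFDerivAt_inv h1).comp z (hu1.sub hu2)
  have hi2 : HasFDerivAt (fun w : ℝ×ℝ×ℝ×ℝ => (w.2.1 - w.1)⁻¹) _ z :=
    (hasFDerivAt_inv h2).comp z (hu2.sub hu1)
  -- aFun
  have hA0 : HasFDerivAt
      (fun w : ℝ×ℝ×ℝ×ℝ => w.2.2.1 * w.2.2.1 * (w.1 - w.2.1)⁻¹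
        + w.2.2.2 * w.2.2.2 * (w.2.1 - w.1)⁻¹ - w.1 * w.1 - w.1 * w.2.1 - w.2.1 * w.2.1) _ z :=
    (((((hp1.mul hp1).mul hi1).add ((hp2.mul hp2).mul hi2)).sub (hu1.mul hu1)).sub
      (hu1.mul hu2)).sub (hu2.mul hu2)
  have heqA : aFun = (fun w : ℝ×ℝ×ℝ×ℝ => w.2.2.1 * w.2.2.1 * (w.1 - w.2.1)⁻¹
        + w.2.2.2 * w.2.2.2 * (w.2.1 - w.1)⁻¹ - w.1 * w.1 - w.1 * w.2.1 - w.2.1 * w.2.1) := by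
    funext w; unfold aFun; rw [div_eq_mul_inv, div_eq_mul_inv]; ring
  -- bFun
  have hB0 : HasFDerivAt
      (fun w : ℝ×ℝ×ℝ×ℝ => w.2.1 * (w.2.2.1 * w.2.2.1) * (w.2.1 - w.1)⁻¹
        + w.1 * (w.2.2.2 * w.2.2.2) * (w.1 - w.2.1)⁻¹ + (w.1 + w.2.1) * w.1 * w.2.1) _ z :=
    (((hu2.mul (hp1.mul hp1)).mul hi2).add (((hu1.mul (hp2.mul hp2)).mul hi1))).add
      (((hu1.add hu2).mul hu1).mul hu2)
  have heqB : bFun = (fun w : ℝ×ℝ×ℝ×ℝ => w.2.1 * (w.2.2.1 * w.2.2.1) * (w.2.1 - w.1)⁻¹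
        + w.1 * (w.2.2.2 * w.2.2.2) * (w.1 - w.2.1)⁻¹ + (w.1 + w.2.1) * w.1 * w.2.1) := by
    funext w; unfold bFun; rw [div_eq_mul_inv, div_eq_mul_inv]; ring
  -- x₃Fun
  have hX0 : HasFDerivAt
      (fun w : ℝ×ℝ×ℝ×ℝ => ((w.2.2.1 - w.2.2.2) * (w.1 - w.2.1)⁻¹)
        * ((w.2.2.1 - w.2.2.2) * (w.1 - w.2.1)⁻¹) - (w.1 + w.2.1)) _ z :=
    (((hp1.sub hp2).mul hi1).mul ((hp1.sub hp2).mul hi1)).sub (hu1.add hu2)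
  have hXeq : x₃Fun = (fun w : ℝ×ℝ×ℝ×ℝ => ((w.2.2.1 - w.2.2.2) * (w.1 - w.2.1)⁻¹)
        * ((w.2.2.1 - w.2.2.2) * (w.1 - w.2.1)⁻¹) - (w.1 + w.2.1)) := by
    funext w; unfold x₃Fun; rw [div_eq_mul_inv]; ring
  -- y₃Fun
  have hY0 : HasFDerivAt
      (fun w : ℝ×ℝ×ℝ×ℝ => w.2.2.1 + ((w.2.2.1 - w.2.2.2) * (w.1 - w.2.1)⁻¹)
        * ((((w.2.2.1 - w.2.2.2) * (w.1 - w.2.1)⁻¹)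
        * ((w.2.2.1 - w.2.2.2) * (w.1 - w.2.1)⁻¹) - (w.1 + w.2.1)) - w.1)) _ z :=
    hp1.add (((hp1.sub hp2).mul hi1).mul (hX0.sub hu1))
  have heqY : y₃Fun = (fun w : ℝ×ℝ×ℝ×ℝ => w.2.2.1 + ((w.2.2.1 - w.2.2.2) * (w.1 - w.2.1)⁻¹)
        * ((((w.2.2.1 - w.2.2.2) * (w.1 - w.2.1)⁻¹)
        * ((w.2.2.1 - w.2.2.2) * (w.1 - w.2.1)⁻¹) - (w.1 + w.2.1)) - w.1)) := by
    funext w; unfold y₃Fun; rw [hXeq]; simp only [div_eq_mul_inv]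
  refine ⟨?_, ?_, ?_⟩
  · unfold pb
    rw [heqB, hXeq, hB0.fderiv, hX0.fderiv]
    simp only [ContinuousLinearMap.add_apply, ContinuousLinearMap.sub_apply,
      ContinuousLinearMap.smul_apply, ContinuousLinearMap.comp_apply,
      ContinuousLinearMap.smulRight_apply, ContinuousLinearMap.one_apply, ContinuousLinearMap.toSpanSingleton_apply,
      ContinuousLinearMap.coe_fst', ContinuousLinearMap.coe_snd', smul_eq_mul,
      Prod.fst, Prod.snd, ContinuousLinearMap.coe_sub', Pi.sub_apply, Pi.mul_apply, Pi.add_apply, Function.comp,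
      mul_zero, mul_one, zero_mul, one_mul, add_zero, zero_add, sub_zero, zero_sub, mul_neg, neg_zero]
    rw [heqY]; simp only []
    field_simp
    ring
  · unfold pb
    rw [heqB, heqY, hB0.fderiv, hY0.fderiv]
    simp only [ContinuousLinearMap.add_apply, ContinuousLinearMap.sub_apply,
      ContinuousLinearMap.smul_apply, ContinuousLinearMap.comp_apply,
      ContinuousLinearMap.smulRight_apply, ContinuousLinearMap.one_apply, ContinuousLinearMap.toSpanSingleton_apply,
      ContinuousLinearMap.coe_fst', ContinuousLinearMap.coe_snd', smul_eq_mul,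
      Prod.fst, Prod.snd, ContinuousLinearMap.coe_sub', Pi.sub_apply, Pi.mul_apply, Pi.add_apply, Function.comp,
      mul_zero, mul_one, zero_mul, one_mul, add_zero, zero_add, sub_zero, zero_sub, mul_neg, neg_zero]
    rw [hXeq, heqA]; simp only []
    field_simp
    ring
  · unfold pb
    rw [hXeq, heqY, hX0.fderiv, hY0.fderiv]
    simp only [ContinuousLinearMap.add_apply, ContinuousLinearMap.sub_apply,
      ContinuousLinearMap.smul_apply, ContinuousLinearMap.comp_apply,
      ContinuousLinearMap.smulRight_apply, ContinuousLinearMap.one_apply, ContinuousLinearMap.toSpanSingleton_apply,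
      ContinuousLinearMap.coe_fst', ContinuousLinearMap.coe_snd', smul_eq_mul,
      Prod.fst, Prod.snd, ContinuousLinearMap.coe_sub', Pi.sub_apply, Pi.mul_apply, Pi.add_apply, Function.comp,
      mul_zero, mul_one, zero_mul, one_mul, add_zero, zero_add, sub_zero, zero_sub, mul_neg, neg_zero]
    field_simp
    ring
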